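/- For every integer n ≥ 2, ∑_{k=0}^{n} (-1)^k * C(n,k) / (n*k + n - 1) = n^n * n! / ∏_{k=1}^{n+1} (n*k - 1). -/

import Mathlib

lemma key (n : ℕ) : ∀ x : ℝ, 0 < x →
    ∑ k ∈ Finset.range (n + 1), (-1 : ℝ) ^ k * (n.choose k) / (x + k) =
      n.factorial / ∏ j ∈ Finset.range (n + 1), (x + j) := by
  induction n with
  | zero => intro x hx; simp
  | succ n ih =>
    intro x hx
    have hx1 : (0:ℝ) < x + 1 := by linarith
    have hshift :
        ∑ k ∈ Finset.range (n + 2), (-1 : ℝ) ^ k * ((n+1).choose k) / (x + k)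
          = (∑ k ∈ Finset.range (n + 1), (-1 : ℝ) ^ k * (n.choose k) / (x + k))
            - ∑ k ∈ Finset.range (n + 1), (-1 : ℝ) ^ k * (n.choose k) / ((x+1) + k) := by
      rw [Finset.sum_range_succ' (fun k => (-1 : ℝ) ^ k * ((n+1).choose k) / (x + k)) (n+1)]
      have hsplit : ∀ k ∈ Finset.range (n+1),
          (-1 : ℝ) ^ (k+1) * ((n+1).choose (k+1)) / (x + (k+1))
            = (-1 : ℝ) ^ (k+1) * (n.choose (k+1)) / (x + (k+1))
              - (-1 : ℝ) ^ k * (n.choose k) / ((x+1) + k) := by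
        intro k hk
        rw [Nat.choose_succ_succ]
        push_cast
        have : x + 1 + (k:ℝ) ≠ 0 := by positivity
        field_simp
        ring
      push_cast
      rw [Finset.sum_congr rfl hsplit, Finset.sum_sub_distrib]
      have h2 : (∑ k ∈ Finset.range (n+1), (-1 : ℝ) ^ (k+1) * (n.choose (k+1)) / (x + (k+1)))
          + (-1:ℝ)^0 * ((n+1).choose 0) / (x + (0:ℕ))
          = ∑ k ∈ Finset.range (n+1), (-1 : ℝ) ^ k * (n.choose k) / (x + k) := by
        have := Finset.sum_range_succ' (fun k => (-1 : ℝ) ^ k * (n.choose k) / (x + k)) (n+1)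
        rw [Finset.sum_range_succ] at this
        simp only [Nat.choose_succ_self] at this
        push_cast at this ⊢
        simp at this ⊢
        linarith [this]
      push_cast at h2 ⊢
      linarith [h2]
    rw [hshift, ih x hx, ih (x+1) hx1]
    have hP : (0:ℝ) < ∏ j ∈ Finset.range (n + 1), (x + j) := by
      apply Finset.prod_pos; intro j _; positivity
    have hQ : (0:ℝ) < ∏ j ∈ Finset.range (n + 1), ((x+1) + j) := by
      apply Finset.prod_pos; intro j _; positivity
    have hF1 : ∏ j ∈ Finset.range (n + 2), (x + j)
        = (∏ j ∈ Finset.range (n + 1), (x + j)) * (x + (n+1)) := by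
      rw [Finset.prod_range_succ]; push_cast; ring_nf
    have hF2 : ∏ j ∈ Finset.range (n + 2), (x + j)
        = (∏ j ∈ Finset.range (n + 1), ((x+1) + j)) * x := by
      rw [Finset.prod_range_succ' (fun j => x + j) (n+1)]
      push_cast; ring_nf
    have hfac : ((n+1).factorial : ℝ) = (n+1) * n.factorial := by
      push_cast [Nat.factorial_succ]; ring
    rw [hF1, hfac]
    have hxne : x ≠ 0 := ne_of_gt hx
    have hxn : x + ((n:ℝ)+1) ≠ 0 := by positivity
    rw [div_sub_div _ _ (ne_of_gt hP) (ne_of_gt hQ)]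
    rw [eq_div_iff (by positivity)]
    have : (∏ j ∈ Finset.range (n + 1), ((x+1) + j))
        = (∏ j ∈ Finset.range (n + 1), (x + j)) * (x + (n+1)) / x := by
      rw [← hF1, hF2]; field_simp
    rw [this]
    field_simp
    ring

theorem stmt_5 (n : ℕ) (hn : 2 ≤ n) :
    ∑ k ∈ Finset.range (n + 1),
      (-1 : ℝ) ^ k * (n.choose k) / (n * k + n - 1) =
    (n : ℝ) ^ n * n.factorial / ∏ k ∈ Finset.Icc 1 (n + 1), ((n : ℝ) * k - 1) := by
  have hn1 : (2:ℝ) ≤ (n:ℝ) := by exact_mod_cast hn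
  have hnpos : (0:ℝ) < n := by linarith
  have hnne : (n:ℝ) ≠ 0 := ne_of_gt hnpos
  set x : ℝ := ((n:ℝ) - 1) / n with hxdef
  have hx : 0 < x := by
    apply div_pos <;> linarith
  have hterm : ∀ k ∈ Finset.range (n+1),
      (-1 : ℝ) ^ k * (n.choose k) / ((n:ℝ) * k + n - 1)
        = (1 / n) * ((-1 : ℝ) ^ k * (n.choose k) / (x + k)) := by
    intro k _
    have hd : (n:ℝ) * k + n - 1 > 0 := by nlinarith [Nat.cast_nonneg (α := ℝ) k]
    have hxk : x + (k:ℝ) = ((n:ℝ) * k + n - 1) / n := by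
      rw [hxdef]; field_simp; ring
    rw [hxk]
    field_simp
  rw [Finset.sum_congr rfl hterm, ← Finset.mul_sum, key n x hx]
  have hprod : ∏ j ∈ Finset.range (n + 1), (x + j)
      = (∏ k ∈ Finset.Icc 1 (n + 1), ((n : ℝ) * k - 1)) / (n:ℝ) ^ (n+1) := by
    rw [← Finset.Ico_add_one_right_eq_Icc, Finset.prod_Ico_eq_prod_range]
    simp only [Nat.succ_sub_one, Nat.add_sub_cancel]
    rw [show ((n:ℝ))^(n+1) = ∏ _j ∈ Finset.range (n+1), (n:ℝ) from by
      rw [Finset.prod_const, Finset.card_range]]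
    rw [← Finset.prod_div_distrib]
    apply Finset.prod_congr rfl
    intro j _
    rw [hxdef]
    push_cast
    field_simp
    ring
  rw [hprod]
  have hPpos : (0:ℝ) < ∏ k ∈ Finset.Icc 1 (n + 1), ((n : ℝ) * k - 1) := by
    apply Finset.prod_pos
    intro k hk
    simp only [Finset.mem_Icc] at hk
    have : (1:ℝ) ≤ (k:ℝ) := by exact_mod_cast hk.1
    nlinarith
  field_simp
  ring
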